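/- For every integer m ≥ 2 the ratio of consecutive SFTR-1/2 weights satisfies ω_m/ω_{m−1} ≤ 1 − 2α/m < 1 (in particular ω_{m−1} ≠ 0). -/
import Mathlib

/-- The SFTR-1/2 weights `ω_m`. -/
noncomputable def sftrW (α : ℝ) : ℕ → ℝ
  | 0 => (2 * α / (α + 1)) ^ α
  | 1 => -α * (2 * α / (α + 1)) ^ (α + 1)
  | (m + 2) =>
      2 * α / (((m : ℝ) + 2) * (α + 1)) *
        (((((m : ℝ) + 2) - 1) / α - α) * sftrW α (m + 1) +
          (α - 1) / (2 * α) * (((m : ℝ) + 2) - 2) * sftrW α m)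

lemma sftrW_key (α : ℝ) (hα0 : 0 < α) (hα1 : α < 1) : ∀ n : ℕ,
    sftrW α (n + 1) < 0 ∧
    (1 - α) * (-sftrW α (n + 1)) ≤ -sftrW α (n + 2) ∧
    -sftrW α (n + 2) ≤ (1 - 2 * α / ((n : ℝ) + 2)) * (-sftrW α (n + 1)) := by
  have hα1' : (0:ℝ) < α + 1 := by linarith
  intro n
  induction n with
  | zero =>
    have hb : (0:ℝ) < 2 * α / (α + 1) := by positivity
    have hp := Real.rpow_pos_of_pos hb (α + 1)
    have h1 : sftrW α 1 < 0 := by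
      show -α * (2 * α / (α + 1)) ^ (α + 1) < 0
      nlinarith
    have h2 : sftrW α 2 = (1 - α) * sftrW α 1 := by
      have e : sftrW α 2 = 2 * α / ((((0:ℕ) : ℝ) + 2) * (α + 1)) *
        ((((((0:ℕ) : ℝ) + 2) - 1) / α - α) * sftrW α 1 +
          (α - 1) / (2 * α) * ((((0:ℕ) : ℝ) + 2) - 2) * sftrW α 0) := by
        simp only [sftrW]
      rw [e]
      have hαne : α ≠ 0 := ne_of_gt hα0
      have hne : (α:ℝ) + 1 ≠ 0 := ne_of_gt hα1'
      push_cast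
      field_simp
      ring
    refine ⟨h1, ?_, ?_⟩
    · rw [h2]; exact le_of_eq (by ring)
    · rw [h2]; push_cast
      have h4 : (1 : ℝ) - 2 * α / ((0:ℝ) + 2) = 1 - α := by
        norm_num
      rw [h4]
      exact le_of_eq (by ring)
  | succ n ih =>
    obtain ⟨h1, h2, h3⟩ := ih
    push_cast
    show sftrW α (n + 2) < 0 ∧
      (1 - α) * (-sftrW α (n + 2)) ≤ -sftrW α (n + 3) ∧
      -sftrW α (n + 3) ≤ (1 - 2 * α / ((n : ℝ) + 1 + 2)) * (-sftrW α (n + 2))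
    set u : ℝ := -sftrW α (n + 1) with hu_def
    set v : ℝ := -sftrW α (n + 2) with hv_def
    have hu : 0 < u := by rw [hu_def]; linarith
    have hv : 0 < v := lt_of_lt_of_le (by nlinarith) h2
    have h1' : sftrW α (n + 2) < 0 := by rw [hv_def] at hv; linarith
    set c : ℝ := (n : ℝ) with hc_def
    have hc : 0 ≤ c := Nat.cast_nonneg n
    have e : sftrW α (n + 3) = 2 * α / (((n:ℝ) + 1 + 2) * (α + 1)) *
        (((((n:ℝ) + 1 + 2) - 1) / α - α) * sftrW α (n + 2) +
          (α - 1) / (2 * α) * (((n:ℝ) + 1 + 2) - 2) * sftrW α (n + 1)) := by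
      show sftrW α (n + 1 + 2) = _
      simp only [sftrW]
      push_cast
      ring
    have hαne : α ≠ 0 := ne_of_gt hα0
    have hne : (α:ℝ) + 1 ≠ 0 := ne_of_gt hα1'
    have hne3 : c + 3 ≠ 0 := by positivity
    have hA : -sftrW α (n + 3) =
        (2 * (c + 2 - α ^ 2) * v - (1 - α) * (c + 1) * u) / ((c + 3) * (α + 1)) := by
      have eu : sftrW α (n + 1) = -u := by rw [hu_def]; ring
      have ev : sftrW α (n + 2) = -v := by rw [hv_def]; ring
      rw [e, eu, ev]
      field_simp
      ring
    have hvu : v ≤ u := by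
      have hd : 0 < 2 * α / (c + 2) * u := by positivity
      nlinarith [h3]
    have hden : (0:ℝ) < (c + 3) * (α + 1) := by positivity
    refine ⟨h1', ?_, ?_⟩
    · rw [hA, le_div_iff₀ hden]
      have key : (1 - α) * (c + 1) * u ≤ (c + 1) * v := by nlinarith [mul_le_mul_of_nonneg_left h2 (by linarith : (0:ℝ) ≤ c + 1)]
      nlinarith [key, mul_nonneg (mul_nonneg (by linarith : (0:ℝ) ≤ c + 1) (sq_nonneg α)) hv.le]
    · rw [hA, div_le_iff₀ hden]
      have hexp : (1 - 2 * α / (c + 1 + 2)) * ((c + 3) * (α + 1)) * v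
          = (c + 3 - 2 * α) * (α + 1) * v := by
        field_simp
        ring
      have key : (1 - α) * (c + 1) * v ≤ (1 - α) * (c + 1) * u :=
        mul_le_mul_of_nonneg_left hvu (by nlinarith : (0:ℝ) ≤ (1 - α) * (c + 1))
      nlinarith [key, hexp]

theorem sftrW_ratio_le (α : ℝ) (hα : α ∈ Set.Ioo (0 : ℝ) 1) :
    ∀ m : ℕ, 2 ≤ m →
      sftrW α (m - 1) ≠ 0 ∧
      sftrW α m / sftrW α (m - 1) ≤ 1 - 2 * α / (m : ℝ) ∧
      1 - 2 * α / (m : ℝ) < 1 := by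
  obtain ⟨hα0, hα1⟩ := hα
  intro m hm
  obtain ⟨k, rfl⟩ := Nat.exists_eq_add_of_le hm
  obtain ⟨h1, h2, h3⟩ := sftrW_key α hα0 hα1 k
  have hidx : 2 + k - 1 = k + 1 := by omega
  have hidx2 : 2 + k = k + 2 := by omega
  rw [hidx, hidx2]
  have hcast : ((k + 2 : ℕ) : ℝ) = (k : ℝ) + 2 := by push_cast; ring
  rw [hcast]
  have hu : 0 < -sftrW α (k + 1) := by linarith
  have hm2 : (0:ℝ) < (k : ℝ) + 2 := by positivity
  refine ⟨ne_of_lt h1, ?_, ?_⟩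
  · have hdiv : sftrW α (k + 2) / sftrW α (k + 1)
        = (-sftrW α (k + 2)) / (-sftrW α (k + 1)) := by
      rw [neg_div_neg_eq]
    rw [hdiv, div_le_iff₀ hu]
    linarith [h3]
  · have : 0 < 2 * α / ((k:ℝ) + 2) := by positivity
    linarith
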